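/- Let P(x,y;K) = xᵀAy + K·xᵀBy where x = (x², x, 1)ᵀ, y = (y², y, 1)ᵀ, and A, B are 3×3 complex matrices. Define the QRT horizontal switch r_x: (x,y) ↦ (x̄,y) with x̄ = (f₁(y) - f₂(y)x)/(f₂(y) - f₃(y)x), where (f₁,f₂,f₃)ᵀ = (Ay) × (By). Then P(x̄, y; K) = 0 whenever P(x, y; K) = 0 and the denominators involved are nonzero. In particular r_x preserves every member of the pencil. -/

import Mathlib

open Matrix

/-- `xvec x = (x², x, 1)`. -/
def xvec (x : ℂ) : Fin 3 → ℂ := ![x ^ 2, x, 1]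

/-- The biquadratic `P(x,y;K) = xᵀ(A + K B)y` with `x = (x²,x,1)`, `y = (y²,y,1)`. -/
noncomputable def biquadratic (A B : Matrix (Fin 3) (Fin 3) ℂ) (K x y : ℂ) : ℂ :=
  xvec x ⬝ᵥ ((A + K • B) *ᵥ xvec y)

theorem qrt_horizontal_switch_preserves_pencil
    (A B : Matrix (Fin 3) (Fin 3) ℂ) (K x y : ℂ)
    (f : Fin 3 → ℂ)
    (hf : f = crossProduct (A *ᵥ xvec y) (B *ᵥ xvec y))
    (hden : f 1 - f 2 * x ≠ 0)
    (hP : biquadratic A B K x y = 0) :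
    biquadratic A B K ((f 0 - f 1 * x) / (f 1 - f 2 * x)) y = 0 := by
  set v : Fin 3 → ℂ := (A *ᵥ xvec y) + K • (B *ᵥ xvec y) with hv
  have hbq : ∀ z : ℂ, biquadratic A B K z y = z ^ 2 * v 0 + z * v 1 + v 2 := by
    intro z
    simp [biquadratic, add_mulVec, smul_mulVec, hv, xvec, dotProduct,
      Fin.sum_univ_three, Pi.add_apply, Pi.smul_apply]
  have hE : v 0 * f 0 + v 1 * f 1 + v 2 * f 2 = 0 := by
    have h1 : (A *ᵥ xvec y) ⬝ᵥ f = 0 := by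
      rw [hf]; exact dot_self_cross _ _
    have h2 : (B *ᵥ xvec y) ⬝ᵥ f = 0 := by
      rw [hf]; exact dot_cross_self _ _
    have : v ⬝ᵥ f = 0 := by
      rw [hv, add_dotProduct, smul_dotProduct, h1, h2]; simp
    simpa [dotProduct, Fin.sum_univ_three] using this
  have hP' : x ^ 2 * v 0 + x * v 1 + v 2 = 0 := by rw [← hbq]; exact hP
  rw [hbq]
  field_simp [show f 1 - x * f 2 ≠ 0 by rwa [mul_comm]]
  linear_combination (((f 1 - f 2 * x) ^ 2 - f 2 * (f 0 - 2 * f 1 * x + f 2 * x ^ 2)) * hP' +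
    (f 0 - 2 * f 1 * x + f 2 * x ^ 2) * hE)
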